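/- Let N ≥ n ≥ 1, let y ∈ ℝ^N, and let W₁, …, W_n : ℝ^N → ℝ^N be vector fields, each Lipschitz with constant L and bounded in norm by K, such that the vectors W₁(y), …, W_n(y) are linearly independent. Suppose Ψ : ℝⁿ → ℝ^N is twice continuously differentiable with ‖D²Ψ(a)‖ ≤ c₀ for all a ∈ ℝⁿ, and suppose that for every a ∈ ℝⁿ there is a continuously differentiable curve γ_a : [0,1] → ℝ^N with γ_a(0) = y, γ_a′(t) = Σ_{i=1}^n a_i W_i(γ_a(t)) for all t ∈ [0,1], and Ψ(a) = γ_a(1). Then there exist ε₁ > 0 and r > 0 such that |Ψ(a) − Ψ(a′)| ≥ ε₁ |a − a′| for all a, a′ in the closed ball of radius r centered at 0 in ℝⁿ. -/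

import Mathlib

open Set

lemma aux_fderiv_lipschitz {E F : Type*} [NormedAddCommGroup E] [NormedSpace ℝ E]
    [NormedAddCommGroup F] [NormedSpace ℝ F]
    (f : E → F) (c : ℝ) (hf : ContDiff ℝ 2 f) (hc : ∀ x, ‖iteratedFDeriv ℝ 2 f x‖ ≤ c)
    (x y : E) : ‖fderiv ℝ f x - fderiv ℝ f y‖ ≤ c * ‖x - y‖ := by
  have hg : ContDiff ℝ 1 (fderiv ℝ f) := hf.fderiv_right (by norm_num)
  have hd : ∀ z : E, HasFDerivWithinAt (fderiv ℝ f) (fderiv ℝ (fderiv ℝ f) z) univ z :=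
    fun z => ((hg.differentiable (by norm_num)) z).hasFDerivAt.hasFDerivWithinAt
  have hb : ∀ z : E, ‖fderiv ℝ (fderiv ℝ f) z‖ ≤ c := by
    intro z
    have e1 : ‖iteratedFDeriv ℝ 1 (fderiv ℝ f) z‖ = ‖iteratedFDeriv ℝ 2 f z‖ :=
      norm_iteratedFDeriv_fderiv
    have e2 : ‖fderiv ℝ (iteratedFDeriv ℝ 0 (fderiv ℝ f)) z‖
        = ‖iteratedFDeriv ℝ 1 (fderiv ℝ f) z‖ := norm_fderiv_iteratedFDeriv
    rw [iteratedFDeriv_zero_eq_comp, LinearIsometryEquiv.comp_fderiv] at e2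
    rw [ContinuousLinearMap.opNorm_ext _ (fderiv ℝ (fderiv ℝ f) z) (fun v => by simp)] at e2
    rw [e2, e1]; exact hc z
  exact (convex_univ (𝕜 := ℝ) (E := E)).norm_image_sub_le_of_norm_hasFDerivWithin_le
    (fun z _ => hd z) (fun z _ => hb z) (mem_univ y) (mem_univ x)

theorem flow_approximation_nondegenerate
    (n N : ℕ) (hn : 1 ≤ n) (hnN : n ≤ N)
    (y : EuclideanSpace ℝ (Fin N))
    (W : Fin n → EuclideanSpace ℝ (Fin N) → EuclideanSpace ℝ (Fin N))
    (L K : ℝ)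
    (hLip : ∀ i x x', ‖W i x - W i x'‖ ≤ L * ‖x - x'‖)
    (hBdd : ∀ i x, ‖W i x‖ ≤ K)
    (hInd : LinearIndependent ℝ (fun i => W i y))
    (Ψ : EuclideanSpace ℝ (Fin n) → EuclideanSpace ℝ (Fin N))
    (c₀ : ℝ)
    (hΨC2 : ContDiff ℝ 2 Ψ)
    (hD2 : ∀ a, ‖iteratedFDeriv ℝ 2 Ψ a‖ ≤ c₀)
    (hflow : ∀ a : EuclideanSpace ℝ (Fin n),
      ∃ γ : ℝ → EuclideanSpace ℝ (Fin N),
        ContDiffOn ℝ 1 γ (Icc (0:ℝ) 1) ∧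
        γ 0 = y ∧
        (∀ t ∈ Icc (0:ℝ) 1, HasDerivAt γ (∑ i, a i • W i (γ t)) t) ∧
        Ψ a = γ 1) :
    ∃ ε₁ > (0:ℝ), ∃ r > (0:ℝ),
      ∀ a ∈ Metric.closedBall (0 : EuclideanSpace ℝ (Fin n)) r,
        ∀ a' ∈ Metric.closedBall (0 : EuclideanSpace ℝ (Fin n)) r,
          ε₁ * ‖a - a'‖ ≤ ‖Ψ a - Ψ a'‖ := by
  classical
  -- basic positivity facts
  have hc₀ : 0 ≤ c₀ := le_trans (norm_nonneg _) (hD2 0)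
  have hK : 0 ≤ K := le_trans (norm_nonneg _) (hBdd ⟨0, hn⟩ y)
  have hN : 0 < N := lt_of_lt_of_le hn hnN
  have hL : 0 ≤ L := by
    have h := hLip ⟨0, hn⟩ (y + EuclideanSpace.single ⟨0, hN⟩ (1:ℝ)) y
    have h2 : ‖(y + EuclideanSpace.single ⟨0, hN⟩ (1:ℝ)) - y‖ = 1 := by
      simp [add_sub_cancel_left, EuclideanSpace.norm_single]
    rw [h2, mul_one] at h
    exact le_trans (norm_nonneg _) h
  -- the linear map T a = ∑ aᵢ Wᵢ(y)
  set Tl : EuclideanSpace ℝ (Fin n) →ₗ[ℝ] EuclideanSpace ℝ (Fin N) :=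
    { toFun := fun a => ∑ i, a i • W i y
      map_add' := by
        intro a b
        simp [PiLp.add_apply, add_smul, Finset.sum_add_distrib]
      map_smul' := by
        intro c a
        simp [PiLp.smul_apply, smul_smul, Finset.smul_sum] } with hTl
  have hTker : LinearMap.ker Tl = ⊥ := by
    rw [LinearMap.ker_eq_bot]
    intro a b hab
    have h1 : ∑ i, ((a - b) i) • W i y = 0 := by
      simp only [PiLp.sub_apply, sub_smul, Finset.sum_sub_distrib]
      have : Tl a = Tl b := hab
      simpa [hTl] using sub_eq_zero_of_eq this
    have h2 := (Fintype.linearIndependent_iff.mp hInd) (fun i => (a - b) i) h1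
    have : a - b = 0 := by
      ext i; exact h2 i
    exact sub_eq_zero.mp this
  obtain ⟨Ka, hKa, hanti⟩ := Tl.exists_antilipschitzWith hTker
  set k : ℝ := (Ka : ℝ) with hk
  have hkpos : 0 < k := hKa
  -- coordinate bound
  have hcoord : ∀ (a : EuclideanSpace ℝ (Fin n)) (i : Fin n), |a i| ≤ ‖a‖ := by
    intro a i
    have h := abs_real_inner_le_norm (EuclideanSpace.single i (1:ℝ)) a
    simpa [EuclideanSpace.inner_single_left, EuclideanSpace.norm_single] using h
  have hsum : ∀ (a : EuclideanSpace ℝ (Fin n)), ∑ i, |a i| ≤ (n : ℝ) * ‖a‖ := by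
    intro a
    calc ∑ i, |a i| ≤ ∑ _i : Fin n, ‖a‖ := Finset.sum_le_sum (fun i _ => hcoord a i)
    _ = (n : ℝ) * ‖a‖ := by simp [Finset.sum_const, nsmul_eq_mul]
  -- key quadratic estimate
  set M : ℝ := L * K * (n : ℝ) ^ 2 with hM
  have hMnn : 0 ≤ M := by positivity
  have hquad : ∀ a : EuclideanSpace ℝ (Fin n), ‖Ψ a - y - Tl a‖ ≤ M * ‖a‖ ^ 2 := by
    intro a
    obtain ⟨γ, hγC1, hγ0, hγ', hγ1⟩ := hflow a
    set S : ℝ := ∑ i, |a i| with hS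
    have hSnn : 0 ≤ S := Finset.sum_nonneg (fun i _ => abs_nonneg _)
    have hSle : S ≤ (n : ℝ) * ‖a‖ := hsum a
    -- the curve stays within S*K of y
    have hnear : ∀ t ∈ Icc (0:ℝ) 1, ‖γ t - y‖ ≤ S * K := by
      intro t ht
      have hb : ∀ s ∈ Icc (0:ℝ) 1, ‖∑ i, a i • W i (γ s)‖ ≤ S * K := by
        intro s _
        calc ‖∑ i, a i • W i (γ s)‖ ≤ ∑ i, ‖a i • W i (γ s)‖ := norm_sum_le _ _
        _ ≤ ∑ i, |a i| * K := by
            refine Finset.sum_le_sum (fun i _ => ?_)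
            rw [norm_smul, Real.norm_eq_abs]
            exact mul_le_mul_of_nonneg_left (hBdd i (γ s)) (abs_nonneg _)
        _ = S * K := by rw [hS, Finset.sum_mul]
      have := (convex_Icc (0:ℝ) 1).norm_image_sub_le_of_norm_hasDerivWithin_le
        (fun s hs => (hγ' s hs).hasDerivWithinAt) hb (left_mem_Icc.mpr zero_le_one) ht
      rw [hγ0] at this
      calc ‖γ t - y‖ ≤ S * K * ‖t - 0‖ := this
      _ ≤ S * K * 1 := by
          refine mul_le_mul_of_nonneg_left ?_ (by positivity)
          rw [sub_zero, Real.norm_eq_abs, abs_of_nonneg ht.1]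
          exact ht.2
      _ = S * K := mul_one _
    -- the displaced curve g t = γ t - t • (Tl a) has small derivative
    have hg' : ∀ t ∈ Icc (0:ℝ) 1,
        HasDerivWithinAt (fun t => γ t - t • (Tl a))
          ((∑ i, a i • W i (γ t)) - Tl a) (Icc (0:ℝ) 1) t := by
      intro t ht
      exact ((hγ' t ht).sub (by simpa using (hasDerivAt_id t).smul_const (Tl a))).hasDerivWithinAt
    have hgb : ∀ t ∈ Icc (0:ℝ) 1, ‖(∑ i, a i • W i (γ t)) - Tl a‖ ≤ S * (L * (S * K)) := by
      intro t ht
      have he : (∑ i, a i • W i (γ t)) - Tl a = ∑ i, a i • (W i (γ t) - W i y) := by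
        simp [hTl, smul_sub, Finset.sum_sub_distrib]
      rw [he]
      calc ‖∑ i, a i • (W i (γ t) - W i y)‖ ≤ ∑ i, ‖a i • (W i (γ t) - W i y)‖ :=
          norm_sum_le _ _
      _ ≤ ∑ i, |a i| * (L * (S * K)) := by
          refine Finset.sum_le_sum (fun i _ => ?_)
          rw [norm_smul, Real.norm_eq_abs]
          refine mul_le_mul_of_nonneg_left ?_ (abs_nonneg _)
          exact le_trans (hLip i (γ t) y)
            (mul_le_mul_of_nonneg_left (hnear t ht) hL)
      _ = S * (L * (S * K)) := by rw [hS]; exact (Finset.sum_mul _ _ _).symm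
    have hmv := (convex_Icc (0:ℝ) 1).norm_image_sub_le_of_norm_hasDerivWithin_le
      hg' hgb (left_mem_Icc.mpr zero_le_one) (right_mem_Icc.mpr zero_le_one)
    have h0 : γ 0 - (0:ℝ) • (Tl a) = y := by rw [hγ0, zero_smul, sub_zero]
    have h1 : γ 1 - (1:ℝ) • (Tl a) = Ψ a - Tl a := by rw [← hγ1, one_smul]
    rw [h0, h1] at hmv
    have : ‖Ψ a - Tl a - y‖ ≤ S * (L * (S * K)) := by
      calc ‖Ψ a - Tl a - y‖ ≤ S * (L * (S * K)) * ‖(1:ℝ) - 0‖ := hmv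
      _ = S * (L * (S * K)) := by norm_num
    calc ‖Ψ a - y - Tl a‖ = ‖Ψ a - Tl a - y‖ := by rw [sub_right_comm]
    _ ≤ S * (L * (S * K)) := this
    _ = L * K * S ^ 2 := by ring
    _ ≤ L * K * ((n : ℝ) * ‖a‖) ^ 2 := by
        refine mul_le_mul_of_nonneg_left ?_ (by positivity)
        exact pow_le_pow_left₀ hSnn hSle 2
    _ = M * ‖a‖ ^ 2 := by rw [hM]; ring
  -- Ψ 0 = y
  have hΨ0 : Ψ 0 = y := by
    have h := hquad 0
    simp only [map_zero, sub_zero, norm_zero, mul_zero, norm_eq_zero] at h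
    have : ‖Ψ 0 - y‖ ≤ 0 := by simpa using h
    have := le_antisymm this (norm_nonneg _)
    rwa [norm_eq_zero, sub_eq_zero] at this
  -- derivative of Ψ at 0 is Tl
  set T : EuclideanSpace ℝ (Fin n) →L[ℝ] EuclideanSpace ℝ (Fin N) :=
    Tl.toContinuousLinearMap with hT
  have hFD : HasFDerivAt Ψ T 0 := by
    rw [hasFDerivAt_iff_isLittleO_nhds_zero]
    rw [Asymptotics.isLittleO_iff]
    intro c hc
    rw [Metric.eventually_nhds_iff]
    refine ⟨c / (M + 1), by positivity, fun h hh => ?_⟩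
    rw [dist_zero_right] at hh
    have hTh : T h = Tl h := rfl
    calc ‖Ψ (0 + h) - Ψ 0 - T h‖ = ‖Ψ h - y - Tl h‖ := by rw [zero_add, hΨ0, hTh]
    _ ≤ M * ‖h‖ ^ 2 := hquad h
    _ = M * ‖h‖ * ‖h‖ := by ring
    _ ≤ c * ‖h‖ := by
        refine mul_le_mul_of_nonneg_right ?_ (norm_nonneg _)
        have : M * ‖h‖ ≤ M * (c / (M + 1)) :=
          mul_le_mul_of_nonneg_left hh.le hMnn
        refine le_trans this ?_
        rw [div_eq_inv_mul]
        rw [show M * ((M + 1)⁻¹ * c) = (M / (M + 1)) * c by ring]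
        refine mul_le_of_le_one_left hc.le ?_
        rw [div_le_one (by positivity)]
        linarith
    _ = c * ‖id h‖ := rfl
  have hfd0 : fderiv ℝ Ψ 0 = T := hFD.fderiv
  -- conclusion
  refine ⟨(2 * k)⁻¹, by positivity, (2 * k * (c₀ + 1))⁻¹, by positivity, ?_⟩
  intro a ha a' ha'
  rw [Metric.mem_closedBall, dist_zero_right] at ha ha'
  set r : ℝ := (2 * k * (c₀ + 1))⁻¹ with hr
  -- ‖fderiv Ψ x - T‖ ≤ c₀ r on the ball
  have hclose : ∀ x ∈ Metric.closedBall (0 : EuclideanSpace ℝ (Fin n)) r,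
      ‖fderiv ℝ Ψ x - T‖ ≤ c₀ * r := by
    intro x hx
    rw [Metric.mem_closedBall, dist_zero_right] at hx
    have := aux_fderiv_lipschitz Ψ c₀ hΨC2 hD2 x 0
    rw [hfd0, sub_zero] at this
    exact le_trans this (mul_le_mul_of_nonneg_left hx hc₀)
  -- mean value on the ball for Ψ - T
  have hmv : ‖(Ψ a - T a) - (Ψ a' - T a')‖ ≤ (c₀ * r) * ‖a - a'‖ := by
    refine (convex_closedBall (0 : EuclideanSpace ℝ (Fin n)) r).norm_image_sub_le_of_norm_hasFDerivWithin_le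
      (f := fun x => Ψ x - T x) (f' := fun x => fderiv ℝ Ψ x - T) (fun x _ => ?_) hclose
      (Metric.mem_closedBall.mpr (by rwa [dist_zero_right])) (Metric.mem_closedBall.mpr (by rwa [dist_zero_right]))
    exact (((hΨC2.differentiable (by norm_num)) x).hasFDerivAt.sub (T.hasFDerivAt)).hasFDerivWithinAt
  -- antilipschitz bound
  have hanti' : ‖a - a'‖ ≤ k * ‖T a - T a'‖ := by
    have h := hanti.le_mul_dist a a'
    rw [dist_eq_norm, dist_eq_norm] at h
    exact h
  have hc₀r : c₀ * r ≤ (2 * k)⁻¹ := by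
    have h1 : c₀ * r ≤ (c₀ + 1) * r := by
      refine mul_le_mul_of_nonneg_right (by linarith) ?_
      rw [hr]; positivity
    have h2 : (c₀ + 1) * r = (2 * k)⁻¹ := by
      rw [hr]; field_simp
    linarith
  have hrearr : (Ψ a - T a) - (Ψ a' - T a') = (Ψ a - Ψ a') - (T a - T a') := by abel
  rw [hrearr] at hmv
  have htri := norm_sub_norm_le (T a - T a') (Ψ a - Ψ a')
  have hsymm : ‖(T a - T a') - (Ψ a - Ψ a')‖ = ‖(Ψ a - Ψ a') - (T a - T a')‖ :=
    norm_sub_rev _ _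
  have hTlow : (k)⁻¹ * ‖a - a'‖ ≤ ‖T a - T a'‖ := by
    rw [inv_mul_le_iff₀ hkpos]
    exact hanti'
  have hmv' : ‖(Ψ a - Ψ a') - (T a - T a')‖ ≤ (2 * k)⁻¹ * ‖a - a'‖ :=
    le_trans hmv (mul_le_mul_of_nonneg_right hc₀r (norm_nonneg _))
  have hhalf : (2 * k)⁻¹ * ‖a - a'‖ = (k)⁻¹ * ‖a - a'‖ - (2 * k)⁻¹ * ‖a - a'‖ := by
    field_simp; ring
  linarith [norm_nonneg (a - a')]
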